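/- Let G be a finite simple graph with vertex set {1,…,n}, n ≥ 3. The set of solutions x ∈ ℂ^n of the system { ∏_{s=1}^n (x_i − s) = 0 and ∏_{j ∈ Adj(i)} (x_i − x_j + 1)·(x_i − x_j − (n−1)) = 0 for every vertex i } is finite, and its cardinality equals the number of pairs (v, W) where v is a vertex of G and W is a closed walk based at v that is a Hamiltonian cycle of G; equivalently, the number of solutions equals 2n times the number of Hamiltonian cycles of G (each Hamiltonian cycle giving n choices of starting vertex and 2 directions). -/

import Mathlib

open SimpleGraph

namespace HamAux

variable {V : Type*} {G : SimpleGraph V}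

/-- A walk following an indexed sequence of adjacent vertices. -/
def mkWalk (g : ℕ → V) (h : ∀ k, G.Adj (g k) (g (k + 1))) : (m : ℕ) → G.Walk (g 0) (g m)
  | 0 => .nil
  | m + 1 => (mkWalk g h m).concat (h m)

@[simp] lemma mkWalk_support (g : ℕ → V) (h : ∀ k, G.Adj (g k) (g (k + 1))) (m : ℕ) :
    (mkWalk g h m).support = (List.range (m + 1)).map g := by
  induction m with
  | zero => rw [List.range_succ]; simp [mkWalk]
  | succ m ih =>
    rw [mkWalk, Walk.support_concat, ih, List.range_succ (n := m + 1)]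
    simp

@[simp] lemma mkWalk_edges (g : ℕ → V) (h : ∀ k, G.Adj (g k) (g (k + 1))) (m : ℕ) :
    (mkWalk g h m).edges = (List.range m).map (fun k => s(g k, g (k + 1))) := by
  induction m with
  | zero => simp [mkWalk]
  | succ m ih =>
    rw [mkWalk, Walk.edges_concat, ih, List.range_succ]
    simp

@[simp] lemma mkWalk_length (g : ℕ → V) (h : ∀ k, G.Adj (g k) (g (k + 1))) (m : ℕ) :
    (mkWalk g h m).length = m := by
  induction m with
  | zero => rfl
  | succ m ih => rw [mkWalk, Walk.length_concat, ih]

lemma walk_eq_of_support_eq {u v : V} (p q : G.Walk u v) (h : p.support = q.support) :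
    p = q := by
  induction p with
  | nil =>
    cases q with
    | nil => rfl
    | cons a q' =>
      rw [Walk.support_nil, Walk.support_cons, Walk.support_eq_cons q'] at h
      simp at h
  | @cons u w v a p' ih =>
    cases q with
    | nil =>
      rw [Walk.support_nil, Walk.support_cons, Walk.support_eq_cons p'] at h
      simp at h
    | @cons _ w' _ a' q' =>
      rw [Walk.support_cons, Walk.support_cons] at h
      have h2 : p'.support = q'.support := List.tail_eq_of_cons_eq h
      have hw : w = w' := by
        have hh := congrArg List.head? h2
        rw [← Walk.cons_tail_support p', ← Walk.cons_tail_support q'] at hh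
        simpa only [List.head?_cons, Option.some.injEq] using hh
      subst hw
      rw [ih q' h2]

section Cyc
variable {n : ℕ} {G : SimpleGraph (Fin n)}

lemma natCast_inj_of_lt {n k l : ℕ} (hk : k < n) (hl : l < n) (h : (k : ZMod n) = l) : k = l := by
  have := congrArg ZMod.val h
  rwa [ZMod.val_natCast, ZMod.val_natCast, Nat.mod_eq_of_lt hk, Nat.mod_eq_of_lt hl] at this

/-- The sequence of vertices indexed cyclically. -/
def seq (w : ZMod n ≃ Fin n) : ℕ → Fin n := fun k => w (k : ZMod n)

lemma seq_adj (w : ZMod n ≃ Fin n) (hadj : ∀ k : ZMod n, G.Adj (w k) (w (k + 1))) (k : ℕ) :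
    G.Adj (seq w k) (seq w (k + 1)) := by
  have := hadj (k : ZMod n)
  simpa [seq] using this

/-- The closed walk associated to a cyclic labelling. -/
def cyc (w : ZMod n ≃ Fin n) (hadj : ∀ k : ZMod n, G.Adj (w k) (w (k + 1))) :
    G.Walk (w 0) (w 0) :=
  (mkWalk (seq w) (seq_adj w hadj) n).copy (by simp [seq]) (by simp [seq])

variable (w : ZMod n ≃ Fin n) (hadj : ∀ k : ZMod n, G.Adj (w k) (w (k + 1)))

lemma cyc_support : (cyc w hadj).support = (List.range (n + 1)).map (seq w) := by
  rw [cyc, Walk.support_copy, mkWalk_support]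

lemma cyc_length : (cyc w hadj).length = n := by
  rw [cyc, Walk.length_copy, mkWalk_length]

lemma cyc_support_tail :
    (cyc w hadj).support.tail = List.map (fun k : ℕ => w ((k : ZMod n) + 1)) (List.range n) := by
  rw [cyc_support, List.range_succ_eq_map, List.map_cons, List.tail_cons, List.map_map]
  refine List.map_congr_left ?_
  intro k _
  simp only [Function.comp_apply, seq, Nat.succ_eq_add_one, Nat.cast_add, Nat.cast_one]

lemma cyc_support_tail_nodup (hn : 3 ≤ n) :
    ((cyc w hadj).support.tail).Nodup := by
  rw [cyc_support_tail]
  refine List.Nodup.map_on ?_ (List.nodup_range (n := n))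
  intro k hk l hl h
  simp only [List.mem_range] at hk hl
  have h2 : ((k : ZMod n)) = l := by
    have := w.injective h
    exact add_right_cancel this
  exact natCast_inj_of_lt hk hl h2

lemma cyc_mem_support_tail (hn : 3 ≤ n) (a : Fin n) :
    a ∈ (cyc w hadj).support.tail := by
  haveI : NeZero n := ⟨by omega⟩
  rw [cyc_support_tail]
  refine List.mem_map.2 ⟨(w.symm a - 1).val, ?_, ?_⟩
  · exact List.mem_range.2 (ZMod.val_lt _)
  · have : (((w.symm a - 1).val : ℕ) : ZMod n) = w.symm a - 1 := by
      simp [ZMod.natCast_val, ZMod.cast_id]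
    rw [this, sub_add_cancel, Equiv.apply_symm_apply]

lemma cyc_edges_nodup (hn : 3 ≤ n) : ((cyc w hadj).edges).Nodup := by
  rw [cyc, Walk.edges_copy, mkWalk_edges]
  refine List.Nodup.map_on ?_ (List.nodup_range (n := n))
  intro k hk l hl h
  simp only [List.mem_range] at hk hl
  rw [Sym2.eq_iff] at h
  simp only [seq, Nat.cast_add, Nat.cast_one] at h
  rcases h with ⟨h1, _⟩ | ⟨h1, h2⟩
  · have : ((k : ZMod n)) = l := w.injective h1
    exact natCast_inj_of_lt hk hl this
  · have e1 : (k : ZMod n) = (l : ZMod n) + 1 := w.injective h1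
    have e2 : (k : ZMod n) + 1 = l := w.injective h2
    exfalso
    have h2 : ((2 : ℕ) : ZMod n) = 0 := by
      push_cast
      linear_combination e2 - e1
    rw [ZMod.natCast_eq_zero_iff] at h2
    have := Nat.le_of_dvd (by norm_num) h2
    omega

lemma cyc_isHamiltonianCycle (hn : 3 ≤ n) : (cyc w hadj).IsHamiltonianCycle := by
  rw [Walk.isHamiltonianCycle_iff_isCycle_and_support_count_tail_eq_one]
  refine ⟨⟨⟨⟨cyc_edges_nodup w hadj hn⟩, ?_⟩, cyc_support_tail_nodup w hadj hn⟩, ?_⟩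
  · intro h
    have := congrArg Walk.length h
    rw [cyc_length] at this
    simp at this
    omega
  · intro a
    exact List.count_eq_one_of_mem (cyc_support_tail_nodup w hadj hn)
      (cyc_mem_support_tail w hadj hn a)


noncomputable def toPair (hn : 3 ≤ n) (p : {w : ZMod n ≃ Fin n // ∀ k, G.Adj (w k) (w (k + 1))}) :
    {p : (v : Fin n) × G.Walk v v // p.2.IsHamiltonianCycle} :=
  ⟨⟨p.1 0, cyc p.1 p.2⟩, cyc_isHamiltonianCycle p.1 p.2 hn⟩

lemma toPair_injective (hn : 3 ≤ n) : Function.Injective (toPair (G := G) hn) := by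
  haveI : NeZero n := ⟨by omega⟩
  intro p q h
  have hs := congrArg
    (fun t : {p : (v : Fin n) × G.Walk v v // p.2.IsHamiltonianCycle} => t.1.2.support) h
  simp only [toPair, cyc_support] at hs
  rw [List.map_inj_left] at hs
  have hw : ∀ k : ZMod n, p.1 k = q.1 k := by
    intro k
    have hk := hs k.val (List.mem_range.2 (by have := ZMod.val_lt (n := n) k; omega))
    simpa [seq, ZMod.natCast_val, ZMod.cast_id] using hk
  exact Subtype.ext (Equiv.ext hw)

set_option maxHeartbeats 2000000 in
lemma toPair_surjective (hn : 3 ≤ n) : Function.Surjective (toPair (G := G) hn) := by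
  haveI : NeZero n := ⟨by omega⟩
  rintro ⟨⟨v, W⟩, hW⟩
  have hlen : W.length = n := by simpa using hW.length_eq
  have hsuplen : W.support.length = n + 1 := by rw [Walk.length_support, hlen]
  set L := W.support.dropLast with hLdef
  have hsupp : L ++ [v] = W.support := by
    have h1 := List.dropLast_append_getLast (W.support_ne_nil)
    rwa [Walk.getLast_support] at h1
  have hLlen : L.length = n := by
    rw [hLdef, List.length_dropLast, hsuplen]
    omega
  have hcount : ∀ a, L.count a = 1 := by
    intro a
    have hca : W.support.count a = L.count a + (if v = a then 1 else 0) := by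
      rw [← hsupp, List.count_append, List.count_singleton]
      simp
    by_cases hav : a = v
    · subst hav
      have h2 := hW.count_support_self
      rw [hca] at h2
      simp at h2
      omega
    · have h2 := hW.support_count_of_ne (fun h => hav h.symm)
      rw [hca] at h2
      simp [Ne.symm hav] at h2
      omega
  have hnodup : L.Nodup := List.nodup_iff_count_le_one.2 (fun a => (hcount a).le)
  have hget : ∀ i (h : i < n), W.support[i]'(by omega) = L[i]'(by omega) := by
    intro i h
    exact (List.getElem_of_eq hsupp.symm (by omega)).trans (List.getElem_append_left (by omega))
  have hgetn : W.support[n]'(by omega) = v := by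
    refine (List.getElem_of_eq hsupp.symm (by omega)).trans ?_
    rw [List.getElem_append_right (by omega)]
    simp [hLlen]
  have hsup0 : W.support[0]'(by omega) = v := by
    have := Walk.support_eq_cons W
    rw [List.getElem_of_eq this]
    simp
  have hL0 : L[0]'(by omega) = v := by
    rw [← hget 0 (by omega), hsup0]
  have congrAdj : ∀ {a b c d : Fin n}, G.Adj a b → a = c → b = d → G.Adj c d := by
    rintro a b c d h rfl rfl
    exact h
  -- adjacency along the support
  have hchain := List.isChain_iff_getElem.1 (W.isChain_adj_support)
  have hadjsup : ∀ i (h : i < n),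
      G.Adj (W.support[i]'(by omega)) (W.support[i+1]'(by omega)) := by
    intro i h
    have := hchain i (by omega)
    simpa [List.get_eq_getElem] using this
  -- the labelling equiv
  have hvlt : ∀ k : ZMod n, k.val < n := fun k => ZMod.val_lt k
  have hkl : ∀ i : ℕ, i < n → i < L.length := fun i h => by omega
  have hL0 : ∀ h : 0 < L.length, L[0]'h = v :=
    fun h => (hget 0 (by omega)).symm.trans hsup0
  have hgetn' : ∀ (i : ℕ) (hi : i < W.support.length), i = n → W.support[i]'hi = v := by
    rintro i hi rfl
    exact hgetn
  obtain ⟨w0, hw0⟩ : ∃ w0 : ZMod n → Fin n,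
      ∀ (k : ZMod n) (i : ℕ) (h : i < L.length), k.val = i → w0 k = L[i]'h := by
    refine ⟨fun k => L[k.val]'(hkl _ (hvlt k)), ?_⟩
    rintro k i h rfl
    rfl
  have hinj : Function.Injective w0 := by
    intro k k' h
    rw [hw0 k k.val (hkl _ (hvlt k)) rfl, hw0 k' k'.val (hkl _ (hvlt k')) rfl] at h
    have := hnodup.getElem_inj_iff.1 h
    exact ZMod.val_injective n this
  have hbij : Function.Bijective w0 :=
    (Fintype.bijective_iff_injective_and_card w0).2
      ⟨hinj, by rw [ZMod.card, Fintype.card_fin]⟩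
  let w : ZMod n ≃ Fin n := Equiv.ofBijective w0 hbij
  have hwapp : ∀ k, w k = w0 k := fun k => rfl
  have hval1 : ∀ k : ZMod n, (k + 1) = (((k.val + 1 : ℕ) : ZMod n)) := by
    intro k
    push_cast
    rw [ZMod.natCast_val, ZMod.cast_id]
  have hadj : ∀ k : ZMod n, G.Adj (w k) (w (k + 1)) := by
    intro k
    rw [hwapp, hwapp]
    by_cases hk : k.val + 1 < n
    · have hv1 : (k + 1).val = k.val + 1 := by
        rw [hval1 k, ZMod.val_natCast, Nat.mod_eq_of_lt hk]
      rw [hw0 k k.val (hkl _ (hvlt k)) rfl, hw0 (k + 1) (k.val + 1) (hkl _ hk) hv1]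
      exact congrAdj (hadjsup k.val (by omega)) (hget k.val (by omega)) (hget (k.val + 1) hk)
    · have hk' : k.val + 1 = n := by have := hvlt k; omega
      have hv1 : (k + 1).val = 0 := by
        rw [hval1 k, hk', ZMod.natCast_self, ZMod.val_zero]
      rw [hw0 k k.val (hkl _ (hvlt k)) rfl, hw0 (k + 1) 0 (hkl _ (by omega)) hv1, hL0]
      exact congrAdj (hadjsup k.val (by omega)) (hget k.val (by omega))
        (hgetn' (k.val + 1) (by omega) hk')
  -- the constructed pair maps to the target
  refine ⟨⟨w, hadj⟩, ?_⟩
  have hcyc : (cyc w hadj).support = W.support := by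
    rw [cyc_support]
    refine List.ext_getElem (by simp [hsuplen]) ?_
    intro i h1 h2
    rw [List.length_map, List.length_range] at h1
    simp only [List.getElem_map, List.getElem_range]
    show w ((i : ℕ) : ZMod n) = _
    rw [hwapp]
    by_cases hi : i < n
    · have hvi : (((i : ℕ) : ZMod n)).val = i := by
        rw [ZMod.val_natCast, Nat.mod_eq_of_lt hi]
      rw [hw0 _ i (hkl _ hi) hvi]
      exact (hget i hi).symm
    · have hi' : i = n := by omega
      have hvi : (((i : ℕ) : ZMod n)).val = 0 := by
        rw [hi', ZMod.natCast_self, ZMod.val_zero]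
      rw [hw0 _ 0 (hkl _ (by omega)) hvi, hL0]
      exact (hgetn' i h2 hi').symm
  have hv : w 0 = v := by
    rw [hwapp, hw0 0 0 (hkl _ (by omega)) ZMod.val_zero, hL0]
  subst hv
  exact Subtype.ext (congrArg (Sigma.mk _) (walk_eq_of_support_eq _ _ hcyc))

end Cyc

section Sol
variable {n : ℕ} {G : SimpleGraph (Fin n)} [DecidableRel G.Adj]

/-- The solution set of the polynomial system. -/
def solSet (G : SimpleGraph (Fin n)) [DecidableRel G.Adj] : Set (Fin n → ℂ) :=
  {x : Fin n → ℂ |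
    ∀ i : Fin n,
      (∏ s ∈ Finset.Icc 1 n, (x i - (s : ℂ)) = 0) ∧
      (∏ j ∈ G.neighborFinset i,
        ((x i - x j + 1) * (x i - x j - ((n : ℂ) - 1))) = 0)}

/-- The solution associated to a cyclic labelling. -/
def toSol (p : {w : ZMod n ≃ Fin n // ∀ k, G.Adj (w k) (w (k + 1))}) : Fin n → ℂ :=
  fun i => (((p.1.symm i).val + 1 : ℕ) : ℂ)

lemma toSol_mem (hn : 3 ≤ n) (p : {w : ZMod n ≃ Fin n // ∀ k, G.Adj (w k) (w (k + 1))}) :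
    toSol p ∈ solSet G := by
  haveI : NeZero n := ⟨by omega⟩
  intro i
  constructor
  · rw [Finset.prod_eq_zero_iff]
    refine ⟨(p.1.symm i).val + 1, ?_, ?_⟩
    · rw [Finset.mem_Icc]
      have := ZMod.val_lt (p.1.symm i)
      omega
    · rw [sub_eq_zero]
      rfl
  · rw [Finset.prod_eq_zero_iff]
    have hik : p.1 (p.1.symm i) = i := p.1.apply_symm_apply i
    refine ⟨p.1 (p.1.symm i + 1), ?_, ?_⟩
    · rw [SimpleGraph.mem_neighborFinset]
      conv_lhs => rw [← hik]
      exact p.2 (p.1.symm i)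
    · have hsymm : p.1.symm (p.1 (p.1.symm i + 1)) = p.1.symm i + 1 := p.1.symm_apply_apply _
      have hvlt := ZMod.val_lt (p.1.symm i)
      have hval1 : (p.1.symm i + 1) = (((p.1.symm i).val + 1 : ℕ) : ZMod n) := by
        push_cast
        rw [ZMod.natCast_val, ZMod.cast_id]
      by_cases hc : (p.1.symm i).val + 1 < n
      · apply mul_eq_zero_of_left
        have hv1 : (p.1.symm i + 1).val = (p.1.symm i).val + 1 := by
          rw [hval1, ZMod.val_natCast, Nat.mod_eq_of_lt hc]
        simp only [toSol, hsymm, hv1]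
        push_cast
        ring
      · apply mul_eq_zero_of_right
        have hc' : (p.1.symm i).val + 1 = n := by omega
        have hv1 : (p.1.symm i + 1).val = 0 := by
          rw [hval1, hc', ZMod.natCast_self, ZMod.val_zero]
        simp only [toSol, hsymm, hv1]
        have : (((p.1.symm i).val + 1 : ℕ) : ℂ) = (n : ℂ) := by rw [hc']
        push_cast at this ⊢
        linear_combination this

lemma toSol_injective (hn : 3 ≤ n) :
    Function.Injective (toSol (G := G)) := by
  haveI : NeZero n := ⟨by omega⟩
  intro p q h
  have hs : ∀ i, p.1.symm i = q.1.symm i := by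
    intro i
    have hi := congrFun h i
    simp only [toSol, Nat.cast_inj] at hi
    have hval : (p.1.symm i).val = (q.1.symm i).val := by omega
    exact ZMod.val_injective n hval
  refine Subtype.ext (Equiv.ext fun k => ?_)
  have h1 := hs (p.1 k)
  rw [p.1.symm_apply_apply] at h1
  have h2 := congrArg q.1 h1
  rw [q.1.apply_symm_apply] at h2
  exact h2.symm

lemma toSol_surjOn (hn : 3 ≤ n) (x : Fin n → ℂ) (hx : x ∈ solSet G) :
    ∃ p : {w : ZMod n ≃ Fin n // ∀ k, G.Adj (w k) (w (k + 1))}, toSol p = x := by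
  haveI : NeZero n := ⟨by omega⟩
  have hex : ∀ i, ∃ s ∈ Finset.Icc 1 n, x i = (s : ℂ) := by
    intro i
    have h1 := (hx i).1
    rw [Finset.prod_eq_zero_iff] at h1
    obtain ⟨s, hs, h0⟩ := h1
    exact ⟨s, hs, sub_eq_zero.1 h0⟩
  choose z hz hxz using hex
  have hz1 : ∀ i, 1 ≤ z i := fun i => (Finset.mem_Icc.1 (hz i)).1
  have hzn : ∀ i, z i ≤ n := fun i => (Finset.mem_Icc.1 (hz i)).2
  obtain ⟨y, hy⟩ : ∃ y : Fin n → ZMod n, ∀ i, y i = ((z i - 1 : ℕ) : ZMod n) :=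
    ⟨_, fun i => rfl⟩
  have hnb : ∀ i, ∃ j, G.Adj i j ∧ y j = y i + 1 := by
    intro i
    have h1 := (hx i).2
    rw [Finset.prod_eq_zero_iff] at h1
    obtain ⟨j, hj, h0⟩ := h1
    rw [SimpleGraph.mem_neighborFinset] at hj
    refine ⟨j, hj, ?_⟩
    rw [hy j, hy i]
    have hi1 := hz1 i
    have hj1 := hz1 j
    rcases mul_eq_zero.1 h0 with h1 | h1
    · have hzz : z j = z i + 1 := by
        have hc : ((z j : ℕ) : ℂ) = ((z i + 1 : ℕ) : ℂ) := by
          push_cast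
          linear_combination hxz i - hxz j - h1
        exact_mod_cast hc
      rw [show z j - 1 = (z i - 1) + 1 by omega]
      push_cast
      ring
    · have hzz : z j + n = z i + 1 := by
        have hc : ((z j + n : ℕ) : ℂ) = ((z i + 1 : ℕ) : ℂ) := by
          push_cast
          linear_combination hxz i - hxz j - h1
        exact_mod_cast hc
      have e1 : ((z j - 1 : ℕ) : ZMod n) = ((z j - 1 + n : ℕ) : ZMod n) := by
        push_cast
        simp
      rw [e1, show z j - 1 + n = (z i - 1) + 1 by omega]
      push_cast
      ring
  have hreach : ∀ (i : Fin n) (k : ℕ), ∃ j, y j = y i + (k : ZMod n) := by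
    intro i k
    induction k with
    | zero => exact ⟨i, by simp⟩
    | succ m ih =>
      obtain ⟨j, hj⟩ := ih
      obtain ⟨j', _, hy'⟩ := hnb j
      refine ⟨j', ?_⟩
      rw [hy', hj]
      push_cast
      ring
  have hysurj : Function.Surjective y := by
    intro t
    have i0 : Fin n := ⟨0, by omega⟩
    obtain ⟨j, hj⟩ := hreach i0 (t - y i0).val
    refine ⟨j, ?_⟩
    rw [hj, ZMod.natCast_val, ZMod.cast_id]
    ring
  have hybij : Function.Bijective y :=
    (Fintype.bijective_iff_surjective_and_card y).2
      ⟨hysurj, by rw [Fintype.card_fin, ZMod.card]⟩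
  let e : Fin n ≃ ZMod n := Equiv.ofBijective y hybij
  have heapp : ∀ i, e i = y i := fun i => rfl
  have hadjw : ∀ k : ZMod n, G.Adj (e.symm k) (e.symm (k + 1)) := by
    intro k
    obtain ⟨j, hj, hyj⟩ := hnb (e.symm k)
    have h1 : y (e.symm k) = k := e.apply_symm_apply k
    rw [h1] at hyj
    have h2 : e.symm (k + 1) = j := by
      rw [← hyj, ← heapp]
      exact e.symm_apply_apply j
    rw [h2]
    exact hj
  refine ⟨⟨e.symm, hadjw⟩, ?_⟩
  funext i
  show (((e.symm.symm i).val + 1 : ℕ) : ℂ) = x i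
  rw [Equiv.symm_symm, hxz i]
  have hv : (e i).val = z i - 1 := by
    rw [heapp, hy i, ZMod.val_natCast]
    apply Nat.mod_eq_of_lt
    have := hz1 i
    have := hzn i
    omega
  rw [hv, show z i - 1 + 1 = z i by have := hz1 i; omega]

end Sol
end HamAux

/-- For a finite simple graph `G` on `Fin n` (with `n ≥ 3`), the solution
set of the system `∏_{s=1}^n (x_i - s) = 0` and
`∏_{j ∈ Adj(i)} (x_i - x_j + 1)(x_i - x_j - (n-1)) = 0` (for every vertex `i`) is finite,
and its cardinality equals the number of pairs `(v, W)` where `v` is a vertex and `W` is a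
closed walk based at `v` that is a Hamiltonian cycle of `G`. -/
theorem hamiltonianCycle_count_solutions (n : ℕ) (hn : 3 ≤ n)
    (G : SimpleGraph (Fin n)) [DecidableRel G.Adj] :
    ({x : Fin n → ℂ |
        ∀ i : Fin n,
          (∏ s ∈ Finset.Icc 1 n, (x i - (s : ℂ)) = 0) ∧
          (∏ j ∈ G.neighborFinset i,
            ((x i - x j + 1) * (x i - x j - ((n : ℂ) - 1))) = 0)}).Finite ∧
    ({x : Fin n → ℂ |
        ∀ i : Fin n,
          (∏ s ∈ Finset.Icc 1 n, (x i - (s : ℂ)) = 0) ∧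
          (∏ j ∈ G.neighborFinset i,
            ((x i - x j + 1) * (x i - x j - ((n : ℂ) - 1))) = 0)}).ncard =
      Nat.card {p : (v : Fin n) × G.Walk v v // p.2.IsHamiltonianCycle} := by
  show (HamAux.solSet G).Finite ∧ (HamAux.solSet G).ncard = _
  have hfin : (HamAux.solSet G).Finite := by
    have hsub : HamAux.solSet G ⊆ Set.univ.pi
        (fun _ : Fin n => ((fun s : ℕ => (s : ℂ)) '' ((Finset.Icc 1 n : Finset ℕ) : Set ℕ))) := by
      intro x hx i _
      have h1 := (hx i).1
      rw [Finset.prod_eq_zero_iff] at h1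
      obtain ⟨s, hs, h0⟩ := h1
      exact ⟨s, hs, (sub_eq_zero.1 h0).symm⟩
    exact Set.Finite.subset (Set.Finite.pi fun i => ((Finset.Icc 1 n).finite_toSet.image _)) hsub
  refine ⟨hfin, ?_⟩
  rw [← Nat.card_coe_set_eq]
  have b1 : Function.Bijective
      (fun p : {w : ZMod n ≃ Fin n // ∀ k, G.Adj (w k) (w (k + 1))} =>
        (⟨HamAux.toSol p, HamAux.toSol_mem hn p⟩ : (HamAux.solSet G))) := by
    constructor
    · intro p q h
      exact HamAux.toSol_injective hn (congrArg Subtype.val h)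
    · rintro ⟨x, hx⟩
      obtain ⟨p, hp⟩ := HamAux.toSol_surjOn hn x hx
      exact ⟨p, Subtype.ext hp⟩
  rw [← Nat.card_eq_of_bijective _ b1]
  exact Nat.card_eq_of_bijective (HamAux.toPair hn)
    ⟨HamAux.toPair_injective hn, HamAux.toPair_surjective hn⟩
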